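/- Let χ₀ > 0, T₀ > 0, and let Ĉ, Ŝ : [0,∞) → ℝ be bounded continuous functions such that p ↦ |Ĉ(ω_ε(p))|/ω_ε(p) and p ↦ |Ŝ(ω_ε(p))|/ω_ε(p) are integrable, where ω_ε(p) = √(p² + ε²χ₀). Define 𝒰^R(φ,T) = (1/π) ∫₀^∞ (p/ω_ε(p)) [cos(pφ + (p − ω_ε(p)) T/ε²) Ĉ(ω_ε(p)) + sin(pφ + (p − ω_ε(p)) T/ε²) Ŝ(ω_ε(p))] dp and 𝒰(φ,T) = (1/π) ∫_{√ε}^∞ (p/ω_ε(p)) [cos(pφ − χ₀T/(2p)) Ĉ(ω_ε(p)) + sin(pφ − χ₀T/(2p)) Ŝ(ω_ε(p))] dp. Then there exist ε₀ > 0 and C > 0 such that for all 0 < ε < ε₀, all φ ∈ ℝ and all 0 ≤ T ≤ T₀, |𝒰^R(φ,T) − 𝒰(φ,T)| ≤ C √ε (‖Ĉ‖_{L^∞} + ‖Ŝ‖_{L^∞}). -/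

import Mathlib

open MeasureTheory Set

noncomputable section

/-- The dispersion relation `ω_ε(p) = √(p² + ε²χ₀)`. -/
def omg (χ₀ ε p : ℝ) : ℝ := Real.sqrt (p ^ 2 + ε ^ 2 * χ₀)

lemma aux_abs_cos (a b : ℝ) : |Real.cos a - Real.cos b| ≤ |a - b| := by
  rw [Real.cos_sub_cos]
  have h1 : |Real.sin ((a+b)/2)| ≤ 1 := Real.abs_sin_le_one _
  have h2 : |Real.sin ((a-b)/2)| ≤ |a-b|/2 := by
    simpa [abs_div] using Real.abs_sin_le_abs (x := (a-b)/2)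
  rw [abs_mul, abs_mul]
  have := abs_nonneg (Real.sin ((a-b)/2))
  have := abs_nonneg (Real.sin ((a+b)/2))
  nlinarith [mul_le_mul h1 h2 (abs_nonneg _) zero_le_one, (abs_two : |(2:ℝ)| = 2), (abs_neg (2:ℝ))]

lemma aux_abs_sin (a b : ℝ) : |Real.sin a - Real.sin b| ≤ |a - b| := by
  rw [Real.sin_sub_sin]
  have h1 : |Real.cos ((a+b)/2)| ≤ 1 := Real.abs_cos_le_one _
  have h2 : |Real.sin ((a-b)/2)| ≤ |a-b|/2 := by
    simpa [abs_div] using Real.abs_sin_le_abs (x := (a-b)/2)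
  rw [abs_mul, abs_mul]
  have := abs_nonneg (Real.sin ((a-b)/2))
  have := abs_nonneg (Real.cos ((a+b)/2))
  nlinarith [mul_le_mul h1 h2 (abs_nonneg _) zero_le_one, (abs_two : |(2:ℝ)| = 2), (abs_neg (2:ℝ))]

lemma aux_bound1 (p w x C S MC MS : ℝ) (hp : 0 ≤ p) (hw : 0 < w) (hwp : p ≤ w)
    (hC : |C| ≤ MC) (hS : |S| ≤ MS) :
    |(p / w) * (Real.cos x * C + Real.sin x * S)| ≤ MC + MS := by
  rw [abs_mul]
  have h1 : |p / w| ≤ 1 := by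
    rw [abs_of_nonneg (div_nonneg hp hw.le)]; exact (div_le_one hw).mpr hwp
  have h2 : |Real.cos x * C + Real.sin x * S| ≤ MC + MS := by
    refine (abs_add_le _ _).trans ?_
    rw [abs_mul, abs_mul]
    have hc := mul_le_mul (Real.abs_cos_le_one x) hC (abs_nonneg _) zero_le_one
    have hs := mul_le_mul (Real.abs_sin_le_one x) hS (abs_nonneg _) zero_le_one
    linarith
  calc |p / w| * |Real.cos x * C + Real.sin x * S| ≤ 1 * (MC + MS) :=
        mul_le_mul h1 h2 (abs_nonneg _) zero_le_one
    _ = MC + MS := one_mul _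

lemma aux_bound2 (χ₀ T₀ ε p w T φ C S MC MS : ℝ) (hχ₀ : 0 < χ₀) (hε : 0 < ε)
    (hp : 0 < p) (hw : 0 < w) (hwp : p ≤ w) (h2 : w ^ 2 = p ^ 2 + ε ^ 2 * χ₀)
    (hT : 0 ≤ T) (hTT : T ≤ T₀) (hC : |C| ≤ MC) (hS : |S| ≤ MS) :
    |(p / w) * (Real.cos (p * φ + (p - w) * T / ε ^ 2) * C
        + Real.sin (p * φ + (p - w) * T / ε ^ 2) * S)
      - (p / w) * (Real.cos (p * φ - χ₀ * T / (2 * p)) * C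
        + Real.sin (p * φ - χ₀ * T / (2 * p)) * S)|
      ≤ ((MC + MS) * (T₀ * χ₀ ^ 2 * ε ^ 2 / 8)) * (p ^ 3)⁻¹ := by
  have hMC0 : 0 ≤ MC := (abs_nonneg _).trans hC
  have hMS0 : 0 ≤ MS := (abs_nonneg _).trans hS
  have hT₀ : 0 ≤ T₀ := hT.trans hTT
  set a := p * φ + (p - w) * T / ε ^ 2 with ha
  set b := p * φ - χ₀ * T / (2 * p) with hb
  have hpw : 0 < p + w := by linarith
  have hab : a - b = T * χ₀ ^ 2 * ε ^ 2 / (2 * p * (p + w) ^ 2) := by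
    rw [ha, hb]
    field_simp
    linear_combination (ε^2*T*χ₀ - 2*p*T*(p+w)) * h2
  have habs : |a - b| ≤ T₀ * χ₀ ^ 2 * ε ^ 2 / 8 * (p ^ 3)⁻¹ := by
    rw [hab, abs_of_nonneg (by positivity)]
    have he : T₀ * χ₀ ^ 2 * ε ^ 2 / 8 * (p ^ 3)⁻¹ = T₀ * χ₀ ^ 2 * ε ^ 2 / (8 * p ^ 3) := by
      ring
    rw [he, div_le_div_iff₀ (by positivity) (by positivity)]
    have hTe : T * χ₀ ^ 2 * ε ^ 2 ≤ T₀ * χ₀ ^ 2 * ε ^ 2 := by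
      nlinarith [mul_le_mul_of_nonneg_right hTT (by positivity : (0:ℝ) ≤ χ₀ ^ 2 * ε ^ 2)]
    nlinarith [mul_le_mul hTe
      (show 8 * p ^ 3 ≤ 2 * p * (p + w) ^ 2 by
        nlinarith [mul_nonneg (mul_nonneg hp.le (sub_nonneg.mpr hwp)) (by linarith : (0:ℝ) ≤ w + 3 * p)])
      (by positivity : (0:ℝ) ≤ 8 * p ^ 3) (by positivity : (0:ℝ) ≤ T₀ * χ₀ ^ 2 * ε ^ 2)]
  have e : (p / w) * (Real.cos a * C + Real.sin a * S)
        - (p / w) * (Real.cos b * C + Real.sin b * S)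
      = (p / w) * ((Real.cos a - Real.cos b) * C + (Real.sin a - Real.sin b) * S) := by
    ring
  rw [e, abs_mul]
  have h1 : |p / w| ≤ 1 := by
    rw [abs_of_nonneg (by positivity)]; exact (div_le_one hw).mpr hwp
  have h3 : |(Real.cos a - Real.cos b) * C + (Real.sin a - Real.sin b) * S|
      ≤ |a - b| * (MC + MS) := by
    refine (abs_add_le _ _).trans ?_
    rw [abs_mul, abs_mul]
    have hc := mul_le_mul (aux_abs_cos a b) hC (abs_nonneg _) (abs_nonneg _)
    have hs := mul_le_mul (aux_abs_sin a b) hS (abs_nonneg _) (abs_nonneg _)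
    nlinarith
  calc |p / w| * |(Real.cos a - Real.cos b) * C + (Real.sin a - Real.sin b) * S|
      ≤ 1 * (|a - b| * (MC + MS)) := mul_le_mul h1 h3 (abs_nonneg _) zero_le_one
    _ = |a - b| * (MC + MS) := one_mul _
    _ ≤ (T₀ * χ₀ ^ 2 * ε ^ 2 / 8 * (p ^ 3)⁻¹) * (MC + MS) :=
        mul_le_mul_of_nonneg_right habs (by linarith)
    _ = ((MC + MS) * (T₀ * χ₀ ^ 2 * ε ^ 2 / 8)) * (p ^ 3)⁻¹ := by ring

/-- Lemma (the right-moving part is approximated by the short-pulse solution):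
with `𝒰^R` the right-moving part in characteristic variables and `𝒰` the truncated
explicit solution of the linearized short-pulse equation, one has
`|𝒰^R(φ,T) − 𝒰(φ,T)| ≤ C √ε (‖Ĉ‖_∞ + ‖Ŝ‖_∞)` for all `φ` and `0 ≤ T ≤ T₀`. -/
theorem statement18 (χ₀ T₀ : ℝ) (hχ₀ : 0 < χ₀) (hT₀ : 0 < T₀)
    (Chat Shat : ℝ → ℝ) (hChat : Continuous Chat) (hShat : Continuous Shat)
    (hintC : ∀ ε : ℝ, 0 < ε →
      IntegrableOn (fun p : ℝ => |Chat (omg χ₀ ε p)| / omg χ₀ ε p) (Ioi 0))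
    (hintS : ∀ ε : ℝ, 0 < ε →
      IntegrableOn (fun p : ℝ => |Shat (omg χ₀ ε p)| / omg χ₀ ε p) (Ioi 0)) :
    ∃ ε₀ > (0 : ℝ), ∃ C > (0 : ℝ), ∀ ε : ℝ, 0 < ε → ε < ε₀ →
      ∀ MC MS : ℝ,
        (∀ k : ℝ, 0 ≤ k → |Chat k| ≤ MC) →
        (∀ k : ℝ, 0 ≤ k → |Shat k| ≤ MS) →
        ∀ UR U : ℝ → ℝ → ℝ,
          (∀ φ T : ℝ, UR φ T = (1 / Real.pi) *
            ∫ p in Ioi (0 : ℝ), (p / omg χ₀ ε p) *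
              (Real.cos (p * φ + (p - omg χ₀ ε p) * T / ε ^ 2) * Chat (omg χ₀ ε p)
                + Real.sin (p * φ + (p - omg χ₀ ε p) * T / ε ^ 2) * Shat (omg χ₀ ε p))) →
          (∀ φ T : ℝ, U φ T = (1 / Real.pi) *
            ∫ p in Ioi (Real.sqrt ε), (p / omg χ₀ ε p) *
              (Real.cos (p * φ - χ₀ * T / (2 * p)) * Chat (omg χ₀ ε p)
                + Real.sin (p * φ - χ₀ * T / (2 * p)) * Shat (omg χ₀ ε p))) →
          ∀ φ T : ℝ, 0 ≤ T → T ≤ T₀ →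
            |UR φ T - U φ T| ≤ C * Real.sqrt ε * (MC + MS) := by
  have hπ : 0 < Real.pi := Real.pi_pos
  refine ⟨1, one_pos, (1 / Real.pi) * (1 + T₀ * χ₀ ^ 2 / 16), by positivity, ?_⟩
  intro ε hε hε1 MC MS hMC hMS UR U hUR hU φ T hT hTT
  have hMC0 : 0 ≤ MC := (abs_nonneg _).trans (hMC 0 le_rfl)
  have hMS0 : 0 ≤ MS := (abs_nonneg _).trans (hMS 0 le_rfl)
  set s : ℝ := Real.sqrt ε with hs_def
  have hs : 0 < s := Real.sqrt_pos.mpr hε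
  have hs2 : s ^ 2 = ε := Real.sq_sqrt hε.le
  have hs1 : s ≤ 1 := by
    rw [hs_def, show (1:ℝ) = Real.sqrt 1 by simp]
    exact Real.sqrt_le_sqrt hε1.le
  have hεs : ε ≤ s := by nlinarith
  -- facts about omg
  have hwpos : ∀ p : ℝ, 0 < omg χ₀ ε p := fun p => Real.sqrt_pos.mpr (by positivity)
  have hwsq : ∀ p : ℝ, (omg χ₀ ε p) ^ 2 = p ^ 2 + ε ^ 2 * χ₀ :=
    fun p => Real.sq_sqrt (by positivity)
  have hwge : ∀ p : ℝ, 0 ≤ p → p ≤ omg χ₀ ε p := fun p hp =>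
    Real.le_sqrt_of_sq_le (by nlinarith [sq_nonneg ε])
  have hcw : Continuous fun p : ℝ => omg χ₀ ε p := by
    simp only [omg]
    exact Real.continuous_sqrt.comp (by fun_prop)
  -- the two integrands
  set fR : ℝ → ℝ := fun p => (p / omg χ₀ ε p) *
      (Real.cos (p * φ + (p - omg χ₀ ε p) * T / ε ^ 2) * Chat (omg χ₀ ε p)
        + Real.sin (p * φ + (p - omg χ₀ ε p) * T / ε ^ 2) * Shat (omg χ₀ ε p)) with hfRdef
  set fU : ℝ → ℝ := fun p => (p / omg χ₀ ε p) *
      (Real.cos (p * φ - χ₀ * T / (2 * p)) * Chat (omg χ₀ ε p)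
        + Real.sin (p * φ - χ₀ * T / (2 * p)) * Shat (omg χ₀ ε p)) with hfUdef
  have hURe : UR φ T = (1 / Real.pi) * ∫ p in Ioi (0 : ℝ), fR p := hUR φ T
  have hUe : U φ T = (1 / Real.pi) * ∫ p in Ioi s, fU p := hU φ T
  -- continuity
  have hcfR : Continuous fR := by
    rw [hfRdef]
    have hphase : Continuous fun p : ℝ => p * φ + (p - omg χ₀ ε p) * T / ε ^ 2 :=
      (continuous_id.mul continuous_const).add
        (((continuous_id.sub hcw).mul continuous_const).div_const _)
    exact (continuous_id.div hcw fun p => (hwpos p).ne').mul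
      (((Real.continuous_cos.comp hphase).mul (hChat.comp hcw)).add
        ((Real.continuous_sin.comp hphase).mul (hShat.comp hcw)))
  have hcfU : ContinuousOn fU (Ioi s) := by
    rw [hfUdef]
    have hphase : ContinuousOn (fun p : ℝ => p * φ - χ₀ * T / (2 * p)) (Ioi s) := by
      refine ContinuousOn.sub ((continuous_id.mul continuous_const).continuousOn) ?_
      exact continuousOn_const.div ((continuous_const.mul continuous_id).continuousOn)
        fun p hp => by have h := hs.trans hp; positivity
    exact ((continuous_id.div hcw fun p => (hwpos p).ne').continuousOn).mul
      (((Real.continuous_cos.comp_continuousOn hphase).mul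
          ((hChat.comp hcw).continuousOn)).add
        ((Real.continuous_sin.comp_continuousOn hphase).mul
          ((hShat.comp hcw).continuousOn)))
  -- pointwise bounds
  have hbR : ∀ p : ℝ, 0 ≤ p → |fR p| ≤ MC + MS := by
    intro p hp
    simp only [hfRdef]
    exact aux_bound1 p (omg χ₀ ε p) _ _ _ MC MS hp (hwpos p) (hwge p hp)
      (hMC _ (hwpos p).le) (hMS _ (hwpos p).le)
  have hdiffb : ∀ p ∈ Ioi s, |fR p - fU p|
      ≤ ((MC + MS) * (T₀ * χ₀ ^ 2 * ε ^ 2 / 8)) * (p ^ 3)⁻¹ := by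
    intro p hp
    have hp0 : 0 < p := hs.trans hp
    simp only [hfRdef, hfUdef]
    exact aux_bound2 χ₀ T₀ ε p (omg χ₀ ε p) T φ _ _ MC MS hχ₀ hε hp0 (hwpos p)
      (hwge p hp0.le) (hwsq p) hT hTT (hMC _ (hwpos p).le) (hMS _ (hwpos p).le)
  -- the dominating function
  set K : ℝ := (MC + MS) * (T₀ * χ₀ ^ 2 * ε ^ 2 / 8) with hKdef
  have hK0 : 0 ≤ K := by positivity
  have hg_eq : ∀ p ∈ Ioi s, K * p ^ (-3 : ℝ) = K * (p ^ 3)⁻¹ := by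
    intro p hp
    have hp0 : 0 < p := hs.trans hp
    rw [Real.rpow_neg hp0.le, show (3:ℝ) = ((3:ℕ):ℝ) by norm_num, Real.rpow_natCast]
  have hgint : IntegrableOn (fun p : ℝ => K * (p ^ 3)⁻¹) (Ioi s) := by
    have h0 : IntegrableOn (fun p : ℝ => K * p ^ (-3:ℝ)) (Ioi s) :=
      (integrableOn_Ioi_rpow_of_lt (by norm_num : (-3:ℝ) < -1) hs).const_mul K
    exact h0.congr_fun hg_eq measurableSet_Ioi
  have hgval : ∫ p in Ioi s, K * (p ^ 3)⁻¹ = K * (ε⁻¹ / 2) := by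
    rw [← setIntegral_congr_fun measurableSet_Ioi hg_eq, integral_const_mul,
      integral_Ioi_rpow_of_lt (by norm_num : (-3:ℝ) < -1) hs]
    rw [show (-3:ℝ) + 1 = -2 by norm_num, Real.rpow_neg hs.le,
      show (2:ℝ) = ((2:ℕ):ℝ) by norm_num, Real.rpow_natCast, hs2]
    ring
  -- a.e. bounds
  have hae : ∀ᵐ p ∂(volume.restrict (Ioi s)), ‖fR p - fU p‖ ≤ K * (p ^ 3)⁻¹ := by
    refine (ae_restrict_iff' measurableSet_Ioi).mpr (Filter.Eventually.of_forall ?_)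
    intro p hp
    simpa [Real.norm_eq_abs] using hdiffb p hp
  have hdiffint : IntegrableOn (fun p => fR p - fU p) (Ioi s) := by
    refine Integrable.mono' hgint ?_ hae
    exact (hcfR.continuousOn.sub hcfU).aestronglyMeasurable measurableSet_Ioi
  have hdiff_est : |∫ p in Ioi s, (fR p - fU p)| ≤ K * (ε⁻¹ / 2) := by
    rw [← hgval, ← Real.norm_eq_abs]
    exact norm_integral_le_of_norm_le hgint hae
  by_cases hint : IntegrableOn fR (Ioi (0:ℝ))
  · -- main case
    have hRioc : IntegrableOn fR (Ioc 0 s) := hint.mono_set Ioc_subset_Ioi_self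
    have hRioi : IntegrableOn fR (Ioi s) := hint.mono_set (Ioi_subset_Ioi hs.le)
    have hUint : IntegrableOn fU (Ioi s) := by
      have e : (fun p => fR p - (fR p - fU p)) = fU := by funext p; ring
      rw [← e]; exact hRioi.sub hdiffint
    have hsplit : (∫ p in Ioi (0:ℝ), fR p)
        = (∫ p in Ioc 0 s, fR p) + ∫ p in Ioi s, fR p := by
      rw [← setIntegral_union (Ioc_disjoint_Ioi le_rfl) measurableSet_Ioi hRioc hRioi,
        Ioc_union_Ioi_eq_Ioi hs.le]
    have hioc_est : |∫ p in Ioc (0:ℝ) s, fR p| ≤ (MC + MS) * s := by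
      have h := norm_setIntegral_le_of_norm_le_const (μ := volume) (s := Ioc (0:ℝ) s)
        (C := MC + MS) (f := fR)
        (by rw [Real.volume_Ioc]; exact ENNReal.ofReal_lt_top)
        (fun p hp => by simpa [Real.norm_eq_abs] using hbR p hp.1.le)
      rwa [Real.volume_real_Ioc, sub_zero, max_eq_left hs.le, Real.norm_eq_abs] at h
    rw [hURe, hUe]
    have hrw : (1 / Real.pi) * (∫ p in Ioi (0:ℝ), fR p)
          - (1 / Real.pi) * ∫ p in Ioi s, fU p
        = (1 / Real.pi) * ((∫ p in Ioc 0 s, fR p) + ∫ p in Ioi s, (fR p - fU p)) := by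
      rw [integral_sub hRioi hUint, hsplit]; ring
    rw [hrw, abs_mul, abs_of_nonneg (by positivity : (0:ℝ) ≤ 1 / Real.pi)]
    have hstep : |(∫ p in Ioc (0:ℝ) s, fR p) + ∫ p in Ioi s, (fR p - fU p)|
        ≤ (MC + MS) * s + K * (ε⁻¹ / 2) :=
      (abs_add_le _ _).trans (add_le_add hioc_est hdiff_est)
    have hK2 : K * (ε⁻¹ / 2) = (MC + MS) * (T₀ * χ₀ ^ 2 / 16) * ε := by
      rw [hKdef]; field_simp; ring
    calc (1 / Real.pi) * |(∫ p in Ioc (0:ℝ) s, fR p) + ∫ p in Ioi s, (fR p - fU p)|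
        ≤ (1 / Real.pi) * ((MC + MS) * s + K * (ε⁻¹ / 2)) := by
          exact mul_le_mul_of_nonneg_left hstep (by positivity)
      _ ≤ (1 / Real.pi) * ((MC + MS) * s + (MC + MS) * (T₀ * χ₀ ^ 2 / 16) * s) := by
          rw [hK2]
          have := mul_le_mul_of_nonneg_left hεs
            (by positivity : (0:ℝ) ≤ (MC + MS) * (T₀ * χ₀ ^ 2 / 16))
          have hpi : (0:ℝ) ≤ 1 / Real.pi := by positivity
          nlinarith
      _ = 1 / Real.pi * (1 + T₀ * χ₀ ^ 2 / 16) * s * (MC + MS) := by ring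
  · -- degenerate case: the integrals are not defined, both are 0
    have hnU : ¬ IntegrableOn fU (Ioi s) := by
      intro h
      apply hint
      have h1 : IntegrableOn fR (Ioc 0 s) :=
        hcfR.integrableOn_Icc.mono_set Ioc_subset_Icc_self
      have h2 : IntegrableOn fR (Ioi s) := by
        have e : (fun p => fU p + (fR p - fU p)) = fR := by funext p; ring
        rw [← e]; exact h.add hdiffint
      have h3 := h1.union h2
      rwa [Ioc_union_Ioi_eq_Ioi hs.le] at h3
    rw [hURe, hUe, integral_undef hint, integral_undef hnU]
    simp only [mul_zero, sub_zero, abs_zero]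
    have hnn : (0:ℝ) ≤ MC + MS := by linarith
    positivity
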